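/- Let M = (A, Σ, δ, ρ) be a Mealy automaton and let M' be the Mealy automaton obtained from M by pruning, i.e., by deleting all states that are not reachable from any cycle of (A, Σ, δ) (together with their transitions). Then M generates a finite semigroup if and only if M' generates a finite semigroup. -/

import Mathlib

/-- Extended production function of a Mealy automaton: `mealyMap δ ρ x` is the
action of the state `x` on finite words over the alphabet. -/
def mealyMap {A S : Type*} (δ : S → A → A) (ρ : A → S → S) : A → List S → List S
  | _, [] => []
  | x, i :: s => ρ x i :: mealyMap δ ρ (δ i x) s

/-- The semigroup generated by a Mealy automaton: the subsemigroup of maps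
`Σ* → Σ*` (under composition) generated by the production functions. -/
def mealySemigroup {A S : Type*} (δ : S → A → A) (ρ : A → S → S) :
    Subsemigroup (Function.End (List S)) :=
  Subsemigroup.closure (Set.range fun x => (mealyMap δ ρ x : Function.End (List S)))

/-- The group generated by an invertible Mealy automaton: the subgroup of
permutations of `Σ*` generated by the production functions. -/
def mealyGroup {A S : Type*} (δ : S → A → A) (ρ : A → S → S) :
    Subgroup (Equiv.Perm (List S)) :=
  Subgroup.closure {f : Equiv.Perm (List S) | ∃ x : A, ⇑f = mealyMap δ ρ x}

/-- A cycle in the automaton `(A, Σ, δ)`: pairwise distinct states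
`states 0, …, states (n-1)` with transitions `states k —labels k→ states (k+1 mod n)`. -/
structure MealyCycle {A S : Type*} (δ : S → A → A) where
  n : ℕ
  npos : 0 < n
  states : Fin n → A
  labels : Fin n → S
  inj : Function.Injective states
  step : ∀ k : Fin n, δ (labels k) (states k) = states ⟨(k + 1) % n, Nat.mod_lt _ npos⟩

/-- The cycle has an external exit. -/
def HasExternalExit {A S : Type*} {δ : S → A → A} (C : MealyCycle δ) : Prop :=
  ∃ (k : Fin C.n) (i : S), δ i (C.states k) ∉ Set.range C.states

/-- The cycle has an internal exit. -/
def HasInternalExit {A S : Type*} {δ : S → A → A} (C : MealyCycle δ) : Prop :=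
  ∃ (k : Fin C.n) (i : S), δ i (C.states k) ∈ Set.range C.states ∧
    δ i (C.states k) ≠ δ (C.labels k) (C.states k)

/-- `v` is reachable from `u` in the automaton `(A, Σ, δ)`. -/
def Reachable {A S : Type*} (δ : S → A → A) (u v : A) : Prop :=
  ∃ s : List S, s.foldl (fun a i => δ i a) u = v

/-- Action of a word `s ∈ Σ*` on states of powers of the automaton (words over `A`),
via the production functions of the dual automaton: `dualAct δ ρ s = δ_s`. -/
def dualAct {A S : Type*} (δ : S → A → A) (ρ : A → S → S) (s : List S) (u : List A) : List A :=
  s.foldl (fun w i => mealyMap ρ δ i w) u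

/-- Two states of a power of a reversible Mealy automaton lie in the same
connected component iff some `δ_s` maps one to the other. -/
def sameComp {A S : Type*} (δ : S → A → A) (ρ : A → S → S) (u w : List A) : Prop :=
  ∃ s : List S, dualAct δ ρ s u = w

/-- The set of states reachable from (a state of) some cycle of the automaton. -/
def cycleReach {A S : Type*} (δ : S → A → A) : Set A :=
  {v | ∃ (C : MealyCycle δ) (k : Fin C.n), Reachable δ (C.states k) v}

/-- The set of states reachable from cycles is closed under all transition functions. -/
lemma cycleReach_closed {A S : Type*} (δ : S → A → A) (i : S) {v : A}
    (hv : v ∈ cycleReach δ) : δ i v ∈ cycleReach δ := by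
  obtain ⟨C, k, s, hs⟩ := hv
  exact ⟨C, k, s ++ [i], by simp [List.foldl_append, hs]⟩

/-- Transition functions of the pruned automaton, the restriction of the automaton to the
states reachable from its cycles. -/
def prunedδ {A S : Type*} (δ : S → A → A) (i : S) (v : cycleReach δ) : cycleReach δ :=
  ⟨δ i v.1, cycleReach_closed δ i v.2⟩
section Aux
variable {A S : Type*} (δ : S → A → A) (ρ : A → S → S)

lemma mealyMap_length (x : A) (s : List S) : (mealyMap δ ρ x s).length = s.length := by
  induction s generalizing x with
  | nil => rfl
  | cons i t ih => simp [mealyMap, ih]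

lemma mealyMap_append (x : A) (s t : List S) :
    mealyMap δ ρ x (s ++ t) = mealyMap δ ρ x s ++ mealyMap δ ρ (s.foldl (fun a i => δ i a) x) t := by
  induction s generalizing x with
  | nil => rfl
  | cons i u ih => simp [mealyMap, ih]

lemma mealyMap_pruned (v : cycleReach δ) (s : List S) :
    mealyMap (prunedδ δ) (fun v : cycleReach δ => ρ v.1) v s = mealyMap δ ρ v.1 s := by
  induction s generalizing v with
  | nil => rfl
  | cons i t ih => simp [mealyMap, ih, prunedδ]

lemma cycleReach_foldl {x : A} (hx : x ∈ cycleReach δ) (s : List S) :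
    s.foldl (fun a i => δ i a) x ∈ cycleReach δ := by
  induction s generalizing x with
  | nil => exact hx
  | cons i t ih => exact ih (cycleReach_closed δ i hx)

end Aux
section Aux2
variable {A S : Type*} (δ : S → A → A)

lemma foldl_take_succ (x : A) (t : List S) (k : ℕ) (hk : k < t.length) :
    (t.take (k + 1)).foldl (fun a i => δ i a) x
      = δ (t.get ⟨k, hk⟩) ((t.take k).foldl (fun a i => δ i a) x) := by
  rw [List.take_succ, List.foldl_append]
  simp [List.getElem?_eq_getElem hk]

lemma mem_cycleReach_of_loop {x : A} {t : List S} (hne : t ≠ [])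
    (h : t.foldl (fun a i => δ i a) x = x) : x ∈ cycleReach δ := by
  obtain ⟨n, ht⟩ : ∃ n, t.length = n := ⟨_, rfl⟩
  induction n using Nat.strong_induction_on generalizing t x with
  | _ n ih =>
  subst ht
  by_cases hinj : Function.Injective
      (fun k : Fin t.length => (t.take k.1).foldl (fun a i => δ i a) x)
  · have npos : 0 < t.length := List.length_pos_iff.2 hne
    refine ⟨⟨t.length, npos,
        fun k => (t.take k.1).foldl (fun a i => δ i a) x,
        fun k => t.get k, hinj, ?_⟩, ⟨0, npos⟩, [], by simp⟩
    intro k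
    simp only
    rw [← foldl_take_succ δ x t k.1 k.2]
    rcases eq_or_lt_of_le (Nat.succ_le_of_lt k.2) with hk | hk
    · have hk' : k.1 + 1 = t.length := hk
      have h0 : (k.1 + 1) % t.length = 0 := by rw [hk']; exact Nat.mod_self _
      simp only [h0]
      rw [hk', List.take_length, List.take_zero]
      simpa using h
    · rw [Nat.mod_eq_of_lt hk]
  · rw [Function.not_injective_iff] at hinj
    obtain ⟨j, k, heq', hnejk⟩ := hinj
    wlog hlt : j.1 < k.1 generalizing j k
    · exact this k j heq'.symm (Ne.symm hnejk) (by omega)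
    set t' := t.take j.1 ++ t.drop k.1 with ht'
    have hlen' : t'.length = j.1 + (t.length - k.1) := by
      simp [ht', Nat.min_eq_left (le_of_lt (lt_of_lt_of_le hlt (Nat.le_of_lt_succ (Nat.lt_succ_of_lt k.2))))]
    have hlt2 : t'.length < t.length := by
      have := k.2; have := j.2; omega
    have hne2 : t' ≠ [] := by
      intro hc
      rw [hc] at hlen'
      simp at hlen'
      have := k.2; omega
    have hkey : (t.take k.1).take j.1 = t.take j.1 := by
      rw [List.take_take, Nat.min_eq_left (le_of_lt hlt)]
    have hsplit : t.take k.1 = t.take j.1 ++ (t.take k.1).drop j.1 := by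
      conv_lhs => rw [← List.take_append_drop j.1 (t.take k.1), hkey]
    have hfold' : t'.foldl (fun a i => δ i a) x = x := by
      rw [ht', List.foldl_append]
      have h1 : (t.take j.1).foldl (fun a i => δ i a) x
          = (t.take k.1).foldl (fun a i => δ i a) x := heq'
      rw [h1, ← List.foldl_append, List.take_append_drop]
      exact h
    exact ih t'.length hlt2 hne2 hfold' rfl

lemma foldl_mem_cycleReach [Fintype A] (x : A) (s : List S)
    (hs : Fintype.card A ≤ s.length) :
    s.foldl (fun a i => δ i a) x ∈ cycleReach δ := by
  obtain ⟨j, k, hne, heq⟩ := Fintype.exists_ne_map_eq_of_card_lt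
    (fun k : Fin (Fintype.card A + 1) => (s.take k.1).foldl (fun a i => δ i a) x)
    (by simp)
  wlog hlt : j.1 < k.1 generalizing j k
  · exact this k j (Ne.symm hne) heq.symm (by omega)
  have hk : k.1 ≤ s.length := le_trans (Nat.le_of_lt_succ k.2) hs
  set y := (s.take j.1).foldl (fun a i => δ i a) x with hy
  have hyt : ((s.take k.1).drop j.1).foldl (fun a i => δ i a) y = y := by
    have hkey : (s.take k.1).take j.1 = s.take j.1 := by
      rw [List.take_take, Nat.min_eq_left (le_of_lt hlt)]
    have : (s.take j.1 ++ (s.take k.1).drop j.1).foldl (fun a i => δ i a) x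
        = (s.take k.1).foldl (fun a i => δ i a) x := by
      conv_rhs => rw [← List.take_append_drop j.1 (s.take k.1), hkey]
    rw [List.foldl_append] at this
    rw [hy, this, ← heq]
  have hne2 : (s.take k.1).drop j.1 ≠ [] := by
    intro hc
    have := congrArg List.length hc
    simp [Nat.min_eq_left hk] at this
    omega
  have hymem : y ∈ cycleReach δ := mem_cycleReach_of_loop δ hne2 hyt
  have : s.foldl (fun a i => δ i a) x = (s.drop j.1).foldl (fun a i => δ i a) y := by
    rw [hy, ← List.foldl_append, List.take_append_drop]
  rw [this]
  exact cycleReach_foldl δ hymem _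

end Aux2
section Aux3
variable {A S : Type*} (δ : S → A → A) (ρ : A → S → S)

/-- Invariant properties of elements of the Mealy semigroup. -/
lemma mealy_good [Fintype A] {f : Function.End (List S)} (hf : f ∈ mealySemigroup δ ρ) :
    (∀ s : List S, (f s).length = s.length) ∧
    (∀ s t : List S, (f (s ++ t)).take s.length = f s) ∧
    (∀ s : List S, s.length = Fintype.card A →
      ((fun t => (f (s ++ t)).drop (Fintype.card A)) : Function.End (List S)) ∈
        mealySemigroup (prunedδ δ) (fun v : cycleReach δ => ρ v.1)) := by
  induction hf using Subsemigroup.closure_induction with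
  | mem g hg =>
    obtain ⟨x, rfl⟩ := hg
    refine ⟨mealyMap_length δ ρ x, fun s t => ?_, fun s hs => ?_⟩
    · show (mealyMap δ ρ x (s ++ t)).take s.length = mealyMap δ ρ x s
      rw [mealyMap_append, List.take_left' (mealyMap_length δ ρ x s)]
    · have hy : s.foldl (fun a i => δ i a) x ∈ cycleReach δ :=
        foldl_mem_cycleReach δ x s (le_of_eq hs.symm)
      have : ((fun t => (mealyMap δ ρ x (s ++ t)).drop (Fintype.card A)) : Function.End (List S))
          = mealyMap (prunedδ δ) (fun v : cycleReach δ => ρ v.1) ⟨_, hy⟩ := by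
        funext t
        show (mealyMap δ ρ x (s ++ t)).drop (Fintype.card A) = _
        rw [mealyMap_append, List.drop_left' (by rw [mealyMap_length, hs]),
          mealyMap_pruned]
      rw [this]
      exact Subsemigroup.subset_closure ⟨_, rfl⟩
  | mul g h hg hh ihg ihh =>
    obtain ⟨glen, gtake, gdrop⟩ := ihg
    obtain ⟨hlen, htake, hdrop⟩ := ihh
    have hsplit : ∀ s t : List S, h (s ++ t) = h s ++ (h (s ++ t)).drop s.length := by
      intro s t
      conv_lhs => rw [← List.take_append_drop s.length (h (s ++ t)), htake s t]
    refine ⟨fun s => ?_, fun s t => ?_, fun s hs => ?_⟩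
    · show (g (h s)).length = s.length
      rw [glen, hlen]
    · show (g (h (s ++ t))).take s.length = g (h s)
      rw [hsplit s t]
      have := gtake (h s) ((h (s ++ t)).drop s.length)
      rwa [hlen] at this
    · have hlen2 : (h s).length = Fintype.card A := by rw [hlen, hs]
      have m1 := gdrop (h s) hlen2
      have m2 := hdrop s hs
      have hmm := mul_mem m1 m2
      convert hmm using 2
      · rfl
      rename_i t
      show (g (h (s ++ t))).drop (Fintype.card A)
        = (g (h s ++ (h (s ++ t)).drop (Fintype.card A))).drop (Fintype.card A)
      conv_lhs => rw [hsplit s t, hs]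

end Aux3
/-- F1: pruning a Mealy automaton (deleting the states not reachable
from any cycle) does not change finiteness of the generated semigroup. -/
theorem prune_finite_iff
    {A S : Type*} [Fintype A] [Fintype S] [Nonempty A] [Nonempty S]
    (δ : S → A → A) (ρ : A → S → S) :
    Finite ↥(mealySemigroup δ ρ) ↔
      Finite ↥(mealySemigroup (prunedδ δ) (fun v : cycleReach δ => ρ v.1)) := by
  constructor
  · intro hfin
    have hsub : mealySemigroup (prunedδ δ) (fun v : cycleReach δ => ρ v.1)
        ≤ mealySemigroup δ ρ := by
      apply Subsemigroup.closure_le.2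
      rintro f ⟨v, rfl⟩
      have heq : (mealyMap (prunedδ δ) (fun v : cycleReach δ => ρ v.1) v
          : Function.End (List S)) = mealyMap δ ρ v.1 :=
        funext (mealyMap_pruned δ ρ v)
      have hmem : (mealyMap δ ρ v.1 : Function.End (List S)) ∈ mealySemigroup δ ρ :=
        Subsemigroup.subset_closure ⟨v.1, rfl⟩
      rw [← heq] at hmem
      exact hmem
    exact Finite.Set.subset _ hsub
  · intro hfin
    set N := Fintype.card A with hN
    haveI : Finite {l : List S // l.length ≤ N} := (List.finite_length_le S N).to_subtype
    haveI : Finite {l : List S // l.length = N} := (List.finite_length_eq S N).to_subtype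
    apply Finite.of_injective
      (β := ({l : List S // l.length ≤ N} → {l : List S // l.length ≤ N}) ×
        ({l : List S // l.length = N} →
          ↥(mealySemigroup (prunedδ δ) (fun v : cycleReach δ => ρ v.1))))
      (f := fun f =>
        (fun s => ⟨f.1 s.1, by rw [(mealy_good δ ρ f.2).1]; exact s.2⟩,
         fun s => ⟨fun t => (f.1 (s.1 ++ t)).drop N, (mealy_good δ ρ f.2).2.2 s.1 s.2⟩))
    intro f g hfg
    have h1 := congrArg Prod.fst hfg
    have h2 := congrArg Prod.snd hfg
    simp only at h1 h2
    apply Subtype.ext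
    funext s
    by_cases hs : s.length ≤ N
    · exact Subtype.ext_iff.1 (congrFun h1 ⟨s, hs⟩)
    · push_neg at hs
      have hsl : (s.take N).length = N := by
        rw [List.length_take]; omega
      have ht' : f.1 (s.take N) = g.1 (s.take N) :=
        Subtype.ext_iff.1 (congrFun h1 ⟨s.take N, le_of_eq hsl⟩)
      have hd' : (fun t => (f.1 (s.take N ++ t)).drop N)
          = (fun t => (g.1 (s.take N ++ t)).drop N) :=
        Subtype.ext_iff.1 (congrFun h2 ⟨s.take N, hsl⟩)
      have hd2 := congrFun hd' (s.drop N)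
      have e1 : ∀ (F : Function.End (List S)), F ∈ mealySemigroup δ ρ →
          F s = F (s.take N) ++ (F (s.take N ++ s.drop N)).drop N := by
        intro F hF
        have htk := (mealy_good δ ρ hF).2.1 (s.take N) (s.drop N)
        rw [hsl] at htk
        conv_lhs => rw [← List.take_append_drop N s,
          ← List.take_append_drop N (F (s.take N ++ s.drop N)), htk]
      rw [e1 f.1 f.2, e1 g.1 g.2, ht', hd2]
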